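/- The function y(x) = cot(π/x) is strictly concave on the interval (2, ∞); equivalently, its second derivative is negative for all x > 2. -/

import Mathlib

open Real

private lemma basic {x : ℝ} (hx : 2 < x) :
    0 < π / x ∧ π / x < π / 2 ∧ 0 < Real.sin (π / x) ∧ 0 < Real.cos (π / x) ∧
    Real.sin (π / x) - π / x * Real.cos (π / x) > 0 := by
  have hx0 : (0:ℝ) < x := by linarith
  have h1 : 0 < π / x := div_pos pi_pos hx0
  have h2 : π / x < π / 2 := by
    rw [div_lt_div_iff₀ hx0 two_pos]; nlinarith [pi_pos]
  have hs : 0 < Real.sin (π / x) :=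
    Real.sin_pos_of_pos_of_lt_pi h1 (by linarith [pi_pos])
  have hc : 0 < Real.cos (π / x) := Real.cos_pos_of_mem_Ioo ⟨by linarith, h2⟩
  have ht := Real.lt_tan h1 h2
  rw [Real.tan_eq_sin_div_cos, lt_div_iff₀ hc] at ht
  exact ⟨h1, h2, hs, hc, by linarith⟩

private lemma hasDerivAt_piDiv {x : ℝ} (hx : 2 < x) :
    HasDerivAt (fun x : ℝ => π / x) (-(π / x ^ 2)) x := by
  have hx0 : x ≠ 0 := by positivity
  have h := (hasDerivAt_inv hx0).const_mul π
  simp only [div_eq_mul_inv]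
  refine h.congr_deriv (Eq.symm ?_)
  field_simp

private lemma deriv1 {x : ℝ} (hx : 2 < x) :
    HasDerivAt (fun x : ℝ => Real.cot (π / x)) (π / (x * Real.sin (π / x)) ^ 2) x := by
  obtain ⟨h1, h2, hs, hc, hk⟩ := basic hx
  have hx0 : (0:ℝ) < x := by linarith
  have hu := hasDerivAt_piDiv hx
  have hcos := (Real.hasDerivAt_cos (π / x)).comp x hu
  have hsin := (Real.hasDerivAt_sin (π / x)).comp x hu
  have hdiv := hcos.div hsin hs.ne'
  have heq : (fun x : ℝ => Real.cot (π / x)) =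
      fun x : ℝ => Real.cos (π / x) / Real.sin (π / x) := by
    funext y; rw [Real.cot_eq_cos_div_sin]
  rw [heq]
  refine hdiv.congr_deriv (Eq.symm ?_)
  have hpyth := Real.sin_sq_add_cos_sq (π / x)
  simp only [Function.comp]
  field_simp
  linear_combination (-1) * hpyth

private lemma deriv2 {x : ℝ} (hx : 2 < x) :
    HasDerivAt (fun x : ℝ => π / (x * Real.sin (π / x)) ^ 2)
      (-(2 * π * (Real.sin (π / x) - π / x * Real.cos (π / x))) /
        (x * Real.sin (π / x)) ^ 3) x := by
  obtain ⟨h1, h2, hs, hc, hk'⟩ := basic hx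
  have hx0 : (0:ℝ) < x := by linarith
  have hu := hasDerivAt_piDiv hx
  have hsin := (Real.hasDerivAt_sin (π / x)).comp x hu
  have hk : HasDerivAt (fun x : ℝ => x * Real.sin (π / x))
      (Real.sin (π / x) - π / x * Real.cos (π / x)) x := by
    have := (hasDerivAt_id x).mul hsin
    refine this.congr_deriv (Eq.symm ?_)
    simp only [Function.comp, id]
    field_simp
    ring
  have hk2 := hk.pow 2
  have hkpos : 0 < x * Real.sin (π / x) := by positivity
  have hdiv := (hasDerivAt_const x π).div hk2 (pow_ne_zero 2 hkpos.ne')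
  refine hdiv.congr_deriv (Eq.symm ?_)
  simp only [Pi.pow_apply]
  field_simp
  ring

theorem cot_strictConcaveOn :
    StrictConcaveOn ℝ (Set.Ioi (2 : ℝ)) (fun x : ℝ => Real.cot (π / x)) ∧
    ∀ x : ℝ, 2 < x → iteratedDeriv 2 (fun x : ℝ => Real.cot (π / x)) x < 0 := by
  have key : ∀ x : ℝ, 2 < x → deriv^[2] (fun x : ℝ => Real.cot (π / x)) x < 0 := by
    intro x hx
    obtain ⟨h1, h2, hs, hc, hk'⟩ := basic hx
    have hx0 : (0:ℝ) < x := by linarith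
    have hmem : Set.Ioi (2:ℝ) ∈ nhds x := isOpen_Ioi.mem_nhds hx
    have heq : deriv (fun x : ℝ => Real.cot (π / x)) =ᶠ[nhds x]
        fun x : ℝ => π / (x * Real.sin (π / x)) ^ 2 :=
      Filter.eventuallyEq_of_mem hmem fun y hy => (deriv1 hy).deriv
    show deriv (deriv fun x : ℝ => Real.cot (π / x)) x < 0
    rw [heq.deriv_eq, (deriv2 hx).deriv]
    apply div_neg_of_neg_of_pos
    · simp only [neg_neg, neg_lt_zero]
      positivity
    · positivity
  constructor
  · apply strictConcaveOn_of_deriv2_neg (convex_Ioi 2)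
    · intro y hy
      exact (deriv1 hy).differentiableAt.continuousAt.continuousWithinAt
    · intro y hy
      rw [interior_Ioi] at hy
      exact key y hy
  · intro x hx
    rw [iteratedDeriv_eq_iterate]
    exact key x hx
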